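/- Let Λ be a proper, source-free topological k-graph and fix n ∈ ℕ^k. If U ⊆ Λ^n is compact, then the cylinder set Z(U) = { x ∈ Λ^∞ : x(0,n) ∈ U } is compact in the infinite-path space Λ^∞; if U is precompact, then Z(U) is precompact. -/

import Mathlib

/-- A topological `k`-graph (Yeend): a small category, presented algebraically on
its (second-countable, locally compact, Hausdorff) space of morphisms with
objects identified with identity morphisms, together with a continuous degree
functor `d : Λ → ℕ^k` satisfying the unique factorisation property.  The range
map is continuous, the source map is a local homeomorphism, and composition
(defined on the set of composable pairs) is continuous and open. -/
structure TopKGraph (k : ℕ) where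
  M : Type
  ts : TopologicalSpace M
  t2 : @T2Space M ts
  lc : @LocallyCompactSpace M ts
  sc : @SecondCountableTopology M ts
  r : M → M
  s : M → M
  comp : M → M → M
  d : M → Fin k → ℕ
  rr : ∀ lam, r (r lam) = r lam
  sr : ∀ lam, s (r lam) = r lam
  rs : ∀ lam, r (s lam) = s lam
  ss' : ∀ lam, s (s lam) = s lam
  r_comp : ∀ {lam mu}, s lam = r mu → r (comp lam mu) = r lam
  s_comp : ∀ {lam mu}, s lam = r mu → s (comp lam mu) = s mu
  comp_assoc : ∀ {lam mu nu}, s lam = r mu → s mu = r nu →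
      comp (comp lam mu) nu = comp lam (comp mu nu)
  id_comp : ∀ lam, comp (r lam) lam = lam
  comp_id : ∀ lam, comp lam (s lam) = lam
  d_comp : ∀ {lam mu}, s lam = r mu → d (comp lam mu) = d lam + d mu
  d_r : ∀ lam, d (r lam) = 0
  d_s : ∀ lam, d (s lam) = 0
  continuous_r : @Continuous M M ts ts r
  continuous_s : @Continuous M M ts ts s
  isLocalHomeomorph_s : @IsLocalHomeomorph M M ts ts s
  continuousOn_comp : @ContinuousOn (M × M) M (@instTopologicalSpaceProd M M ts ts) ts
      (fun p => comp p.1 p.2) {p | s p.1 = r p.2}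
  isOpenMap_comp : ∀ V : Set (M × M), @IsOpen (M × M) (@instTopologicalSpaceProd M M ts ts) V →
      @IsOpen M ts ((fun p : M × M => comp p.1 p.2) '' (V ∩ {p | s p.1 = r p.2}))
  isOpen_deg : ∀ n : Fin k → ℕ, @IsOpen M ts {lam | d lam = n}
  factor : ∀ (lam : M) (m n : Fin k → ℕ), d lam = m + n →
      ∃! p : M × M, s p.1 = r p.2 ∧ comp p.1 p.2 = lam ∧ d p.1 = m ∧ d p.2 = n

attribute [instance] TopKGraph.ts TopKGraph.t2 TopKGraph.lc TopKGraph.sc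

variable {k : ℕ}

/-- An `s`-section: a set contained in an open set on which the source map is
injective (equivalently, since `s` is a local homeomorphism, on which `s`
restricts to a homeomorphism onto its image). -/
def TopKGraph.IsSSection (G : TopKGraph k) (W : Set G.M) : Prop :=
  ∃ U : Set G.M, IsOpen U ∧ W ⊆ U ∧ Set.InjOn G.s U

/-- A topological `k`-graph is proper if, for each `m ∈ ℕ^k`, the preimage under
`r|_{Λ^m}` of any compact set is compact. -/
def TopKGraph.Proper (G : TopKGraph k) : Prop :=
  ∀ (m : Fin k → ℕ) (K : Set G.M), IsCompact K →
    IsCompact {lam : G.M | G.d lam = m ∧ G.r lam ∈ K}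

/-- A topological `k`-graph is source-free if `vΛ^{e_i} ≠ ∅` for every vertex `v`
and every `i`. -/
def TopKGraph.SourceFree (G : TopKGraph k) : Prop :=
  ∀ v : G.M, G.r v = v → ∀ i : Fin k,
    ∃ lam : G.M, G.d lam = Pi.single i 1 ∧ G.r lam = v

/-- A normalised `𝕋`-valued 2-cocycle on a topological `k`-graph. -/
def TopKGraph.IsCocycle (G : TopKGraph k) (c : G.M → G.M → Circle) : Prop :=
  (∀ lam mu nu, G.s lam = G.r mu → G.s mu = G.r nu →
      c lam mu * c (G.comp lam mu) nu = c lam (G.comp mu nu) * c mu nu) ∧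
  (∀ lam, c lam (G.s lam) = 1) ∧ (∀ lam, c (G.r lam) lam = 1)

/-- A continuous normalised `𝕋`-valued 2-cocycle on a topological `k`-graph:
normalised, satisfies the cocycle identity, and is continuous on the set of
composable pairs. -/
def TopKGraph.IsContinuousCocycle (G : TopKGraph k) (c : G.M → G.M → Circle) : Prop :=
  G.IsCocycle c ∧
    ContinuousOn (fun p : G.M × G.M => c p.1 p.2) {p | G.s p.1 = G.r p.2}
open scoped ENNReal ComplexConjugate

/-- The unique factorisation `lam = p.1 ⬝ p.2` of a path `lam` with `d(p.1) = m`
(meaningful whenever `m ≤ d lam`, by the unique factorisation property); thus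
`(pathFac G m lam).1 = λ(0,m)` and, for `lam ∈ Λ^n`, `(pathFac G m lam).2 = λ(m,n)`. -/
noncomputable def TopKGraph.pathFac (G : TopKGraph k) (m : Fin k → ℕ) (lam : G.M) :
    G.M × G.M :=
  letI := Classical.propDecidable; if h : ∃ p : G.M × G.M, G.s p.1 = G.r p.2 ∧ G.comp p.1 p.2 = lam ∧
      G.d p.1 = m ∧ G.d p.2 = G.d lam - m then h.choose else (lam, lam)

/-- An infinite path in `Λ`: a degree-preserving functor `x : Ω_k → Λ`, recorded
by its segments `x(m,n) ∈ Λ^{n-m}` for `m ≤ n` in `ℕ^k`. -/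
structure TopKGraph.InfPath (G : TopKGraph k) where
  seg : (Fin k → ℕ) → (Fin k → ℕ) → G.M
  d_seg : ∀ {m n : Fin k → ℕ}, m ≤ n → G.d (seg m n) = n - m
  seg_id : ∀ m : Fin k → ℕ, seg m m = G.r (seg m m)
  s_seg : ∀ {m n p : Fin k → ℕ}, m ≤ n → n ≤ p → G.s (seg m n) = G.r (seg n p)
  comp_seg : ∀ {m n p : Fin k → ℕ}, m ≤ n → n ≤ p →
      G.comp (seg m n) (seg n p) = seg m p

/-- The cylinder set `Z(U) = {x ∈ Λ^∞ : x(0,n) ∈ U for some n}`. -/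
def TopKGraph.cyl (G : TopKGraph k) (U : Set G.M) : Set G.InfPath :=
  {x | ∃ n : Fin k → ℕ, x.seg 0 n ∈ U}

/-- The topology on the infinite-path space `Λ^∞` is generated by the cylinder
sets `Z(U)` of open subsets `U` of the `Λ^n`, `n ∈ ℕ^k`. -/
instance TopKGraph.instTopInfPath (G : TopKGraph k) : TopologicalSpace G.InfPath :=
  TopologicalSpace.generateFrom
    {S | ∃ (n : Fin k → ℕ) (U : Set G.M), IsOpen U ∧ (∀ lam ∈ U, G.d lam = n) ∧
      S = G.cyl U}

/-- The shift map `T^p : Λ^∞ → Λ^∞`, `T^p(x)(m,n) = x(m+p, n+p)`. -/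
def TopKGraph.shift (G : TopKGraph k) (p : Fin k → ℕ) (x : G.InfPath) : G.InfPath where
  seg m n := x.seg (m + p) (n + p)
  d_seg := by
    intro m n h
    rw [x.d_seg (add_le_add h le_rfl)]
    funext i
    simp only [Pi.sub_apply, Pi.add_apply]
    omega
  seg_id m := x.seg_id (m + p)
  s_seg := fun h1 h2 => x.s_seg (add_le_add h1 le_rfl) (add_le_add h2 le_rfl)
  comp_seg := fun h1 h2 => x.comp_seg (add_le_add h1 le_rfl) (add_le_add h2 le_rfl)


namespace TopKGraph

variable {k : ℕ} (G : TopKGraph k)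

lemma zero_le'' (a : Fin k → ℕ) : (0 : Fin k → ℕ) ≤ a := fun i => Nat.zero_le _

lemma pathFac_spec {m : Fin k → ℕ} {lam : G.M} (h : m ≤ G.d lam) :
    G.s (G.pathFac m lam).1 = G.r (G.pathFac m lam).2 ∧
    G.comp (G.pathFac m lam).1 (G.pathFac m lam).2 = lam ∧
    G.d (G.pathFac m lam).1 = m ∧ G.d (G.pathFac m lam).2 = G.d lam - m := by
  have hadd : G.d lam = m + (G.d lam - m) := by
    funext i; have hi : m i ≤ G.d lam i := h i; simp only [Pi.add_apply, Pi.sub_apply]; omega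
  have hex : ∃ p : G.M × G.M, G.s p.1 = G.r p.2 ∧ G.comp p.1 p.2 = lam ∧
      G.d p.1 = m ∧ G.d p.2 = G.d lam - m := (G.factor lam m (G.d lam - m) hadd).exists
  rw [pathFac]
  rw [dif_pos hex]
  exact hex.choose_spec

lemma pathFac_eq {m : Fin k → ℕ} {lam a b : G.M} (h : m ≤ G.d lam)
    (h1 : G.s a = G.r b) (h2 : G.comp a b = lam) (h3 : G.d a = m) :
    G.pathFac m lam = (a, b) := by
  have hdb : G.d b = G.d lam - m := by
    have hdc := G.d_comp h1
    rw [h2, h3] at hdc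
    funext i
    have := congrFun hdc i
    simp only [Pi.add_apply] at this
    simp only [Pi.sub_apply]
    omega
  have hadd : G.d lam = m + (G.d lam - m) := by
    funext i; have hi : m i ≤ G.d lam i := h i; simp only [Pi.add_apply, Pi.sub_apply]; omega
  obtain ⟨q, hq, huniq⟩ := G.factor lam m (G.d lam - m) hadd
  have spec := G.pathFac_spec h
  have e1 : G.pathFac m lam = q := huniq _ ⟨spec.1, spec.2.1, spec.2.2.1, spec.2.2.2⟩
  have e2 : (a, b) = q := huniq (a, b) ⟨h1, h2, h3, hdb⟩
  rw [e1, e2]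

lemma pathFac_zero (lam : G.M) : G.pathFac 0 lam = (G.r lam, lam) :=
  G.pathFac_eq (zero_le'' _) (by rw [G.sr]) (G.id_comp lam) (G.d_r lam)

lemma continuousOn_pathFac (m p : Fin k → ℕ) (hmp : m ≤ p) :
    ContinuousOn (G.pathFac m) {lam | G.d lam = p} := by
  rw [continuousOn_iff']
  intro W hW
  refine ⟨(fun q : G.M × G.M => G.comp q.1 q.2) ''
      ((W ∩ {q : G.M × G.M | G.d q.1 = m ∧ G.d q.2 = p - m}) ∩ {q | G.s q.1 = G.r q.2}),
      ?_, ?_⟩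
  · apply G.isOpenMap_comp
    exact hW.inter (((G.isOpen_deg m).preimage continuous_fst).inter
      ((G.isOpen_deg (p - m)).preimage continuous_snd))
  · ext lam
    simp only [Set.mem_inter_iff, Set.mem_preimage, Set.mem_setOf_eq, Set.mem_image]
    constructor
    · rintro ⟨hfW, hdp⟩
      have hle : m ≤ G.d lam := by rw [hdp]; exact hmp
      have spec := G.pathFac_spec hle
      exact ⟨⟨G.pathFac m lam, ⟨⟨hfW, spec.2.2.1, by rw [spec.2.2.2, hdp]⟩, spec.1⟩,
        spec.2.1⟩, hdp⟩
    · rintro ⟨⟨q, ⟨⟨hqW, hdm, hdn⟩, hsr⟩, hcomp⟩, hdp⟩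
      have hle : m ≤ G.d lam := by rw [hdp]; exact hmp
      have : G.pathFac m lam = q := by
        rw [G.pathFac_eq hle hsr hcomp hdm]
      rw [this]
      exact ⟨hqW, hdp⟩

lemma seg_zero_d (x : G.InfPath) (m : Fin k → ℕ) : G.d (x.seg 0 m) = m := by
  rw [x.d_seg (zero_le'' m)]
  funext i
  simp only [Pi.sub_apply, Pi.zero_apply, Nat.sub_zero]

lemma r_seg_zero (x : G.InfPath) {a b : Fin k → ℕ} (h : a ≤ b) :
    G.r (x.seg 0 a) = G.r (x.seg 0 b) := by
  rw [← x.comp_seg (zero_le'' a) h, G.r_comp (x.s_seg (zero_le'' a) h)]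

lemma pathFac_seg (x : G.InfPath) {m p : Fin k → ℕ} (hmp : m ≤ p) :
    G.pathFac m (x.seg 0 p) = (x.seg 0 m, x.seg m p) := by
  refine G.pathFac_eq ?_ (x.s_seg (zero_le'' m) hmp) (x.comp_seg (zero_le'' m) hmp) ?_
  · rw [G.seg_zero_d]; exact hmp
  · exact G.seg_zero_d x m

/-- The infinite path assembled from a compatible family of initial segments. -/
noncomputable def limitPath (f : (Fin k → ℕ) → G.M)
    (hd : ∀ m, G.d (f m) = m)
    (hc : ∀ m p : Fin k → ℕ, m ≤ p → (G.pathFac m (f p)).1 = f m) : G.InfPath where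
  seg m n := (G.pathFac m (f (m ⊔ n))).2
  d_seg := by
    intro m n h
    rw [sup_eq_right.2 h]
    have spec := G.pathFac_spec (show m ≤ G.d (f n) by rw [hd n]; exact h)
    rw [spec.2.2.2, hd n]
  seg_id := by
    intro m
    have : G.pathFac m (f (m ⊔ m)) = (f m, G.s (f m)) := by
      rw [sup_idem]
      exact G.pathFac_eq (by rw [hd m]) (by rw [G.rs]) (G.comp_id (f m)) (hd m)
    rw [this, G.rs]
  s_seg := by
    intro m n p h1 h2
    rw [sup_eq_right.2 h1, sup_eq_right.2 h2]
    have specn := G.pathFac_spec (show m ≤ G.d (f n) by rw [hd n]; exact h1)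
    have specp := G.pathFac_spec (show n ≤ G.d (f p) by rw [hd p]; exact h2)
    rw [hc m n h1] at specn
    rw [hc n p h2] at specp
    rw [← G.s_comp specn.1, specn.2.1, specp.1]
  comp_seg := by
    intro m n p h1 h2
    rw [sup_eq_right.2 h1, sup_eq_right.2 h2, sup_eq_right.2 (h1.trans h2)]
    have specn := G.pathFac_spec (show m ≤ G.d (f n) by rw [hd n]; exact h1)
    have specp := G.pathFac_spec (show n ≤ G.d (f p) by rw [hd p]; exact h2)
    rw [hc m n h1] at specn
    rw [hc n p h2] at specp
    have hsnr : G.s (G.pathFac m (f n)).2 = G.r (G.pathFac n (f p)).2 := by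
      rw [← G.s_comp specn.1, specn.2.1, specp.1]
    have key : G.pathFac m (f p) =
        (f m, G.comp (G.pathFac m (f n)).2 (G.pathFac n (f p)).2) := by
      refine G.pathFac_eq (by rw [hd p]; exact h1.trans h2) ?_ ?_ (hd m)
      · rw [G.r_comp hsnr]; exact specn.1
      · rw [← G.comp_assoc specn.1 hsnr, specn.2.1, specp.2.1]
    exact (congrArg Prod.snd key).symm

lemma limitPath_seg_zero (f : (Fin k → ℕ) → G.M)
    (hd : ∀ m, G.d (f m) = m)
    (hc : ∀ m p : Fin k → ℕ, m ≤ p → (G.pathFac m (f p)).1 = f m) (q : Fin k → ℕ) :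
    (G.limitPath f hd hc).seg 0 q = f q := by
  show (G.pathFac 0 (f (0 ⊔ q))).2 = f q
  rw [sup_eq_right.2 (zero_le'' q), G.pathFac_zero]

lemma isClosed_deg (n : Fin k → ℕ) : IsClosed {lam : G.M | G.d lam = n} := by
  rw [← isOpen_compl_iff]
  have : {lam : G.M | G.d lam = n}ᶜ
      = ⋃ m ∈ {m : Fin k → ℕ | m ≠ n}, {lam : G.M | G.d lam = m} := by
    ext lam
    simp only [Set.mem_compl_iff, Set.mem_setOf_eq, Set.mem_iUnion]
    exact ⟨fun h => ⟨G.d lam, h, rfl⟩, fun ⟨m, hm, h⟩ => h ▸ hm⟩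
  rw [this]
  exact isOpen_biUnion fun m _ => G.isOpen_deg m

lemma cyl_eq (q : Fin k → ℕ) (V : Set G.M) (hdV : ∀ lam ∈ V, G.d lam = q) :
    G.cyl V = {x : G.InfPath | x.seg 0 q ∈ V} := by
  ext x
  constructor
  · rintro ⟨m, hm⟩
    have : m = q := by rw [← hdV _ hm, G.seg_zero_d]
    rwa [← this]
  · intro h
    exact ⟨q, h⟩

lemma isOpen_cylSet (q : Fin k → ℕ) (V : Set G.M) (hV : IsOpen V)
    (hdV : ∀ lam ∈ V, G.d lam = q) : IsOpen {x : G.InfPath | x.seg 0 q ∈ V} := by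
  rw [← G.cyl_eq q V hdV]
  exact TopologicalSpace.isOpen_generateFrom_of_mem ⟨q, V, hV, hdV, rfl⟩

lemma key (hP : G.Proper) (n : Fin k → ℕ) (U : Set G.M)
    (hU : ∀ lam ∈ U, G.d lam = n) (hUc : IsCompact U) :
    IsCompact {x : G.InfPath | x.seg 0 n ∈ U} := by
  set Z := {x : G.InfPath | x.seg 0 n ∈ U} with hZ
  rw [isCompact_iff_ultrafilter_le_nhds]
  intro F hF
  rw [Filter.le_principal_iff] at hF
  set K : (Fin k → ℕ) → Set G.M := fun m => {lam | G.d lam = m ∧ G.r lam ∈ G.r '' U}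
    with hKdef
  have hKc : ∀ m, IsCompact (K m) := fun m => hP m _ (hUc.image G.continuous_r)
  have hZK : ∀ x ∈ Z, ∀ m, x.seg 0 m ∈ K m := by
    intro x hx m
    refine ⟨G.seg_zero_d x m, ?_⟩
    rw [G.r_seg_zero x (le_sup_left : m ≤ m ⊔ n), ← G.r_seg_zero x (le_sup_right : n ≤ m ⊔ n)]
    exact ⟨x.seg 0 n, hx, rfl⟩
  have hex : ∀ m, ∃ a ∈ K m, Filter.Tendsto (fun x : G.InfPath => x.seg 0 m) ↑F (nhds a) := by
    intro m
    obtain ⟨a, ha, hle⟩ := (hKc m).ultrafilter_le_nhds (F.map fun x => x.seg 0 m)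
      (by rw [Ultrafilter.coe_map, Filter.le_principal_iff, Filter.mem_map]
          exact Filter.mem_of_superset hF fun x hx => hZK x hx m)
    exact ⟨a, ha, by rwa [Ultrafilter.coe_map] at hle⟩
  choose lam hlamK hlam using hex
  have hd : ∀ m, G.d (lam m) = m := fun m => (hlamK m).1
  have hc : ∀ m p : Fin k → ℕ, m ≤ p → (G.pathFac m (lam p)).1 = lam m := by
    intro m p hmp
    have hcont : ContinuousAt (G.pathFac m) (lam p) :=
      (G.continuousOn_pathFac m p hmp).continuousAt ((G.isOpen_deg p).mem_nhds (hd p))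
    have t1 : Filter.Tendsto (fun x : G.InfPath => (G.pathFac m (x.seg 0 p)).1) ↑F
        (nhds (G.pathFac m (lam p)).1) := (hcont.fst.tendsto).comp (hlam p)
    have t2 : Filter.Tendsto (fun x : G.InfPath => x.seg 0 m) ↑F
        (nhds (G.pathFac m (lam p)).1) :=
      t1.congr fun x => congrArg Prod.fst (G.pathFac_seg x hmp)
    exact tendsto_nhds_unique t2 (hlam m)
  set x0 := G.limitPath lam hd hc with hx0def
  have hx0seg : ∀ q, x0.seg 0 q = lam q := G.limitPath_seg_zero lam hd hc
  have hx0Z : x0 ∈ Z := by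
    rw [hZ, Set.mem_setOf_eq, hx0seg]
    have : lam n ∈ closure U := by
      rw [mem_closure_iff_ultrafilter]
      refine ⟨F.map fun x : G.InfPath => x.seg 0 n, ?_, ?_⟩
      · rw [Ultrafilter.mem_map]
        exact Filter.mem_of_superset hF fun x hx => hx
      · rw [Ultrafilter.coe_map]
        exact hlam n
    rwa [hUc.isClosed.closure_eq] at this
  refine ⟨x0, hx0Z, ?_⟩
  rw [TopKGraph.instTopInfPath, TopologicalSpace.nhds_generateFrom]
  refine le_iInf fun S => le_iInf fun hS => ?_
  obtain ⟨hx0S, q, V, hVopen, hdV, rfl⟩ := hS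
  rw [Filter.le_principal_iff]
  rw [G.cyl_eq q V hdV] at hx0S ⊢
  have hmemV : V ∈ nhds (lam q) := hVopen.mem_nhds (by rw [← hx0seg q]; exact hx0S)
  exact hlam q hmemV

end TopKGraph

/-- Let `Λ` be a proper, source-free topological `k`-graph and
`U ⊆ Λ^n`.  If `U` is compact then the cylinder set
`Z(U) = {x ∈ Λ^∞ : x(0,n) ∈ U}` is compact, and if `U` is precompact then `Z(U)`
is precompact. -/
theorem cyl_compact_of_compact {k : ℕ} (G : TopKGraph k)
    (hP : G.Proper) (hSF : G.SourceFree) (n : Fin k → ℕ)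
    (U : Set G.M) (hU : ∀ lam ∈ U, G.d lam = n) :
    (IsCompact U → IsCompact {x : G.InfPath | x.seg 0 n ∈ U}) ∧
    (IsCompact (closure U) → IsCompact (closure {x : G.InfPath | x.seg 0 n ∈ U})) := by
  constructor
  · exact fun hUc => G.key hP n U hU hUc
  · intro hUcl
    have hUsub : ∀ lam ∈ closure U, G.d lam = n :=
      closure_minimal hU (G.isClosed_deg n)
    have h1 : IsCompact {x : G.InfPath | x.seg 0 n ∈ closure U} :=
      G.key hP n (closure U) hUsub hUcl
    have h2 : IsClosed {x : G.InfPath | x.seg 0 n ∈ closure U} := by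
      rw [← isOpen_compl_iff]
      have : {x : G.InfPath | x.seg 0 n ∈ closure U}ᶜ
          = {x : G.InfPath | x.seg 0 n ∈ ({lam | G.d lam = n} \ closure U)} := by
        ext x
        simp only [Set.mem_compl_iff, Set.mem_setOf_eq, Set.mem_diff]
        exact ⟨fun h => ⟨G.seg_zero_d x n, h⟩, fun h => h.2⟩
      rw [this]
      exact G.isOpen_cylSet n _ ((G.isOpen_deg n).sdiff isClosed_closure)
        fun lam hl => hl.1
    exact h1.of_isClosed_subset isClosed_closure
      (closure_minimal (fun x hx => subset_closure hx) h2)
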